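/- Under the stated OLS setup, the coefficient of z in the joint regression admits the Frisch–Waugh-type representation β̂_z = (z − ẑ)ᵀy / k, where ẑ = X(XᵀX)⁻¹Xᵀz and k = (z − ẑ)ᵀ(z − ẑ); that is, β̂_z is the slope in the simple regression of y on the part of z orthogonal to the column space of X. -/
import Mathlib


open Matrix

private lemma dot_mulVec' {a b : ℕ} (M : Matrix (Fin a) (Fin b) ℝ)
    (u : Fin a → ℝ) (w : Fin b → ℝ) : u ⬝ᵥ (M *ᵥ w) = (Mᵀ *ᵥ u) ⬝ᵥ w := by
  rw [dotProduct_mulVec, mulVec_transpose]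

/-- **Frisch–Waugh representation of the OLS coefficient of `z`.**
Under the stated OLS setup (joint OLS coefficients `(β̂_x, β̂_z)` obtained by stacking
them as `([X z]ᵀ[X z])⁻¹[X z]ᵀy`), the coefficient of `z` satisfies
`β̂_z = (z − zhat)ᵀy / k`, where `zhat = X(XᵀX)⁻¹Xᵀz` and `k = (z − zhat)ᵀ(z − zhat)`. -/
theorem relevance_frisch_waugh_beta_z
    {n p : ℕ} (hn : 0 < n) (hp : 0 < p)
    (X : Matrix (Fin n) (Fin p) ℝ) (z y : Fin n → ℝ)
    -- the augmented matrix `W = [X z]` (last column is `z`)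
    (W : Matrix (Fin n) (Fin (p + 1)) ℝ)
    (hW : W = Matrix.of fun i j => Fin.lastCases (z i) (fun j' => X i j') j)
    -- the augmented Gram matrix `[X z]ᵀ[X z]` is invertible
    (hWunit : IsUnit (Wᵀ * W).det)
    -- hence `XᵀX` is invertible
    (hXunit : IsUnit (Xᵀ * X).det)
    -- stacked joint OLS coefficients `b = ([X z]ᵀ[X z])⁻¹[X z]ᵀy`
    (b : Fin (p + 1) → ℝ) (hb : b = (Wᵀ * W)⁻¹ *ᵥ (Wᵀ *ᵥ y))
    (βx : Fin p → ℝ) (βz : ℝ)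
    (hβx : βx = fun j => b j.castSucc) (hβz : βz = b (Fin.last p))
    -- `zhat = X(XᵀX)⁻¹Xᵀz` and `k = (z − zhat)ᵀ(z − zhat)`
    (zhat : Fin n → ℝ) (hzhat : zhat = X *ᵥ ((Xᵀ * X)⁻¹ *ᵥ (Xᵀ *ᵥ z)))
    (k : ℝ) (hk : k = (z - zhat) ⬝ᵥ (z - zhat)) :
    βz = (z - zhat) ⬝ᵥ y / k := by
  set A := Xᵀ * X with hA
  have hAinv : A⁻¹ * A = 1 := nonsing_inv_mul A hXunit
  have hAinv' : A * A⁻¹ = 1 := mul_nonsing_inv A hXunit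
  have hAsymm : Aᵀ = A := by rw [hA, transpose_mul, transpose_transpose]
  have hAinvSymm : A⁻¹ᵀ = A⁻¹ := by rw [transpose_nonsing_inv, hAsymm]
  -- how `W` acts on vectors
  have hWmul : ∀ v : Fin (p + 1) → ℝ,
      W *ᵥ v = X *ᵥ (fun j => v j.castSucc) + v (Fin.last p) • z := by
    intro v; funext i
    simp only [hW, mulVec, dotProduct, Pi.add_apply, Pi.smul_apply, smul_eq_mul,
      Fin.sum_univ_castSucc, of_apply, Fin.lastCases_castSucc, Fin.lastCases_last]
    ring
  have hWT_cast : ∀ (u : Fin n → ℝ) (j : Fin p), (Wᵀ *ᵥ u) j.castSucc = (Xᵀ *ᵥ u) j := by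
    intro u j
    simp [hW, mulVec, dotProduct, transpose_apply]
  have hWT_last : ∀ (u : Fin n → ℝ), (Wᵀ *ᵥ u) (Fin.last p) = z ⬝ᵥ u := by
    intro u
    simp [hW, mulVec, dotProduct, transpose_apply, mul_comm]
  -- normal equations
  have hNE : Wᵀ *ᵥ (W *ᵥ b) = Wᵀ *ᵥ y := by
    rw [hb, mulVec_mulVec, mulVec_mulVec, mul_nonsing_inv _ hWunit, one_mulVec]
  have hWb : W *ᵥ b = X *ᵥ βx + βz • z := by rw [hWmul, hβx, hβz]
  have eq1 : Xᵀ *ᵥ (X *ᵥ βx + βz • z) = Xᵀ *ᵥ y := by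
    funext j
    have h := congrFun hNE j.castSucc
    rwa [hWT_cast, hWT_cast, hWb] at h
  have eq2 : z ⬝ᵥ (X *ᵥ βx + βz • z) = z ⬝ᵥ y := by
    have h := congrFun hNE (Fin.last p)
    rwa [hWT_last, hWT_last, hWb] at h
  -- solve for `βx`
  have eq1' : A *ᵥ βx + βz • (Xᵀ *ᵥ z) = Xᵀ *ᵥ y := by
    rw [← eq1, mulVec_add, mulVec_smul, mulVec_mulVec]
  have hβx' : βx = A⁻¹ *ᵥ (Xᵀ *ᵥ y) - βz • (A⁻¹ *ᵥ (Xᵀ *ᵥ z)) := by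
    have h : A⁻¹ *ᵥ (A *ᵥ βx + βz • (Xᵀ *ᵥ z)) = A⁻¹ *ᵥ (Xᵀ *ᵥ y) := by rw [eq1']
    rw [mulVec_add, mulVec_smul, mulVec_mulVec, hAinv, one_mulVec] at h
    exact eq_sub_of_add_eq h
  have hXβx : X *ᵥ βx = X *ᵥ (A⁻¹ *ᵥ (Xᵀ *ᵥ y)) - βz • zhat := by
    rw [hβx', mulVec_sub, mulVec_smul, hzhat]
  -- key dot-product identities
  have hzy : z ⬝ᵥ (X *ᵥ (A⁻¹ *ᵥ (Xᵀ *ᵥ y))) = zhat ⬝ᵥ y := by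
    rw [dot_mulVec' X z (A⁻¹ *ᵥ (Xᵀ *ᵥ y)),
      dot_mulVec' A⁻¹ (Xᵀ *ᵥ z) (Xᵀ *ᵥ y), hAinvSymm, hzhat,
      dotProduct_comm (X *ᵥ (A⁻¹ *ᵥ (Xᵀ *ᵥ z))) y,
      dot_mulVec' X y (A⁻¹ *ᵥ (Xᵀ *ᵥ z)),
      dotProduct_comm (Xᵀ *ᵥ y) (A⁻¹ *ᵥ (Xᵀ *ᵥ z))]
  have hXTzhat : Xᵀ *ᵥ zhat = Xᵀ *ᵥ z := by
    rw [hzhat, mulVec_mulVec, ← hA, mulVec_mulVec, hAinv', one_mulVec]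
  have hzz : zhat ⬝ᵥ zhat = z ⬝ᵥ zhat := by
    nth_rewrite 2 [hzhat]
    rw [dot_mulVec', hXTzhat, ← dot_mulVec', ← hzhat]
  -- the main identity `βz * k = (z - zhat) ⬝ᵥ y`
  have eq2' : zhat ⬝ᵥ y - βz * (z ⬝ᵥ zhat) + βz * (z ⬝ᵥ z) = z ⬝ᵥ y := by
    have h := eq2
    rw [dotProduct_add, hXβx, dotProduct_sub, dotProduct_smul, dotProduct_smul,
      smul_eq_mul, smul_eq_mul, hzy] at h
    linarith
  have hkval : k = z ⬝ᵥ z - z ⬝ᵥ zhat := by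
    rw [hk, dotProduct_sub, sub_dotProduct, sub_dotProduct,
      dotProduct_comm zhat z]
    linarith [hzz]
  have hmain : βz * k = (z - zhat) ⬝ᵥ y := by
    rw [hkval, sub_dotProduct]
    linarith [eq2']
  -- `k ≠ 0`
  have hkne : k ≠ 0 := by
    intro h0
    have hz0 : z - zhat = 0 := dotProduct_self_eq_zero.mp (hk.symm.trans h0)
    have hzz' : z = zhat := by rwa [sub_eq_zero] at hz0
    set c : Fin p → ℝ := A⁻¹ *ᵥ (Xᵀ *ᵥ z) with hc
    set v : Fin (p + 1) → ℝ := fun j => Fin.lastCases (-1) c j with hv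
    have hv_last : v (Fin.last p) = -1 := by simp [hv]
    have hWv : W *ᵥ v = 0 := by
      rw [hWmul]
      have h1 : (fun j => v j.castSucc) = c := by funext j; simp [hv]
      rw [h1, hv_last, hzz', hzhat]
      module
    have hv0 : v = 0 := by
      have h1 : (Wᵀ * W)⁻¹ *ᵥ ((Wᵀ * W) *ᵥ v) = v := by
        rw [mulVec_mulVec, nonsing_inv_mul _ hWunit, one_mulVec]
      rw [← h1, ← mulVec_mulVec, hWv]
      simp
    have := congrFun hv0 (Fin.last p)
    rw [hv_last] at this
    norm_num at this
  rw [eq_div_iff hkne]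
  exact hmain
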